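/- Every minimal topological dynamical system (X,T) is either mean equicontinuous or mean sensitive. -/

import Mathlib

open Filter Metric Set
open scoped Classical

noncomputable def lowerDensity (S : Set ℕ) : ℝ :=
  Filter.atTop.liminf (fun n => (((Finset.range (n + 1)).filter (fun i => i ∈ S)).card : ℝ) / (n + 1))

noncomputable def upperDensity (S : Set ℕ) : ℝ :=
  Filter.atTop.limsup (fun n => (((Finset.range (n + 1)).filter (fun i => i ∈ S)).card : ℝ) / (n + 1))

lemma densFun_nonneg (S : Set ℕ) (n : ℕ) :
    0 ≤ (((Finset.range (n + 1)).filter (fun i => i ∈ S)).card : ℝ) / (n + 1) := by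
  positivity

lemma densFun_le_one (S : Set ℕ) (n : ℕ) :
    (((Finset.range (n + 1)).filter (fun i => i ∈ S)).card : ℝ) / (n + 1) ≤ 1 := by
  rw [div_le_one (by positivity)]
  have : ((Finset.range (n + 1)).filter (fun i => i ∈ S)).card ≤ n + 1 := by
    calc _ ≤ (Finset.range (n+1)).card := Finset.card_filter_le _ _
      _ = n + 1 := Finset.card_range _
  exact_mod_cast this

theorem minimal_mean_dichotomy {X : Type*} [MetricSpace X] [CompactSpace X]
    (T : X → X) (hT : Continuous T)
    (hmin : ∀ x : X, Dense (Set.range fun n : ℕ => T^[n] x)) :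
    (∀ x : X, ∀ ε > 0, ∃ δ > 0, ∀ y : X, dist x y ≤ δ →
        upperDensity {i : ℕ | ε < dist (T^[i] x) (T^[i] y)} < ε) ∨
    (∃ ε > 0, ∀ U : Set X, IsOpen U → U.Nonempty → ∃ x ∈ U, ∃ y ∈ U,
        ε < upperDensity {i : ℕ | ε < dist (T^[i] x) (T^[i] y)}) := by
  by_cases hs : (∃ ε > 0, ∀ U : Set X, IsOpen U → U.Nonempty → ∃ x ∈ U, ∃ y ∈ U,
      ε < upperDensity {i : ℕ | ε < dist (T^[i] x) (T^[i] y)})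
  · exact Or.inr hs
  · left
    push_neg at hs
    intro x ε hε
    obtain ⟨U, hUo, hUne, hU⟩ := hs (ε/2) (by positivity)
    -- find n with T^[n] x ∈ U
    obtain ⟨_, ⟨n, rfl⟩, hnU⟩ := (hmin x).exists_mem_open hUo hUne
    -- continuity of T^[n]
    have hcont : Continuous (T^[n]) := hT.iterate n
    have hopen : IsOpen (T^[n] ⁻¹' U) := hUo.preimage hcont
    obtain ⟨r, hr, hball⟩ := Metric.isOpen_iff.1 hopen x hnU
    refine ⟨r/2, by positivity, fun y hy => ?_⟩
    have hyU : T^[n] y ∈ U := hball (by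
      rw [Metric.mem_ball, dist_comm]
      linarith)
    set a := T^[n] x with ha
    set b := T^[n] y with hb
    set A : Set ℕ := {i : ℕ | ε/2 < dist (T^[i] a) (T^[i] b)} with hA
    set S : Set ℕ := {i : ℕ | ε < dist (T^[i] x) (T^[i] y)} with hS
    have hDA : upperDensity A ≤ ε/2 := hU a hnU b hyU
    set g : ℕ → ℝ := fun m => (((Finset.range (m + 1)).filter (fun i => i ∈ A)).card : ℝ) / (m + 1) with hg
    set f : ℕ → ℝ := fun m => (((Finset.range (m + 1)).filter (fun i => i ∈ S)).card : ℝ) / (m + 1) with hf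
    -- counting inequality
    have hcard : ∀ m : ℕ, n ≤ m →
        ((Finset.range (m+1)).filter (fun i => i ∈ S)).card ≤
          n + ((Finset.range (m-n+1)).filter (fun i => i ∈ A)).card := by
      intro m hm
      have hsub : (Finset.range (m+1)).filter (fun i => i ∈ S) ⊆
          Finset.range n ∪ ((Finset.range (m-n+1)).filter (fun i => i ∈ A)).image (· + n) := by
        intro i hi
        simp only [Finset.mem_filter, Finset.mem_range] at hi
        rcases lt_or_ge i n with h' | h'
        · exact Finset.mem_union_left _ (Finset.mem_range.2 h')
        · refine Finset.mem_union_right _ ?_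
          simp only [Finset.mem_image, Finset.mem_filter, Finset.mem_range]
          refine ⟨i - n, ⟨by omega, ?_⟩, by omega⟩
          have hiS : ε < dist (T^[i] x) (T^[i] y) := hi.2
          have hii : i = (i - n) + n := by omega
          rw [hii, Function.iterate_add_apply, Function.iterate_add_apply] at hiS
          simp only [hA, Set.mem_setOf_eq]
          calc ε/2 < ε := by linarith
          _ < dist (T^[i-n] a) (T^[i-n] b) := hiS
      calc ((Finset.range (m+1)).filter (fun i => i ∈ S)).card
          ≤ (Finset.range n ∪ ((Finset.range (m-n+1)).filter (fun i => i ∈ A)).image (· + n)).card :=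
            Finset.card_le_card hsub
        _ ≤ (Finset.range n).card + (((Finset.range (m-n+1)).filter (fun i => i ∈ A)).image (· + n)).card :=
            Finset.card_union_le _ _
        _ ≤ n + ((Finset.range (m-n+1)).filter (fun i => i ∈ A)).card := by
            rw [Finset.card_range]
            exact Nat.add_le_add_left (Finset.card_image_le) n
    -- real inequality
    have hfg : ∀ m : ℕ, n ≤ m → f m ≤ (n : ℝ)/(m+1) + g (m - n) := by
      intro m hm
      have h1 : (0:ℝ) < m + 1 := by positivity
      have h2 : (0:ℝ) < (m - n : ℕ) + 1 := by positivity
      have hc := hcard m hm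
      have hc' : (((Finset.range (m+1)).filter (fun i => i ∈ S)).card : ℝ) ≤
          (n : ℝ) + (((Finset.range (m-n+1)).filter (fun i => i ∈ A)).card : ℝ) := by
        exact_mod_cast hc
      have hstep : f m ≤ ((n : ℝ) + (((Finset.range (m-n+1)).filter (fun i => i ∈ A)).card : ℝ)) / (m+1) := by
        exact div_le_div_of_nonneg_right hc' h1.le
      rw [add_div] at hstep
      refine hstep.trans (add_le_add le_rfl ?_)
      have hmono : ((m - n : ℕ) : ℝ) + 1 ≤ (m : ℝ) + 1 := by
        have : ((m - n : ℕ) : ℝ) ≤ (m : ℝ) := by exact_mod_cast Nat.sub_le m n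
        linarith
      exact div_le_div_of_nonneg_left (Nat.cast_nonneg _) h2 hmono
    -- eventually g (m - n) < 5ε/8
    have hgbd : IsBoundedUnder (· ≤ ·) atTop g :=
      isBoundedUnder_of ⟨1, fun m => densFun_le_one A m⟩
    have hglt : ∀ᶠ m in atTop, g m < 5*ε/8 := by
      refine eventually_lt_of_limsup_lt ?_ hgbd
      calc atTop.limsup g = upperDensity A := rfl
        _ ≤ ε/2 := hDA
        _ < 5*ε/8 := by linarith
    obtain ⟨M, hM⟩ := eventually_atTop.1 hglt
    have hshift : ∀ᶠ m in atTop, g (m - n) < 5*ε/8 :=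
      eventually_atTop.2 ⟨M + n, fun m hm => hM (m - n) (by omega)⟩
    -- eventually n/(m+1) < ε/8
    have htend : Tendsto (fun m : ℕ => (n : ℝ)/(m+1)) atTop (nhds 0) := by
      have := tendsto_const_div_atTop_nhds_zero_nat (n : ℝ)
      have hsh : Tendsto (fun m : ℕ => m + 1) atTop atTop := tendsto_add_atTop_nat 1
      have := this.comp hsh
      refine this.congr fun m => ?_
      simp [Function.comp, Nat.cast_add]
    have hsmall : ∀ᶠ m : ℕ in atTop, (n : ℝ)/(m+1) < ε/8 :=
      Filter.Tendsto.eventually_lt_const (by positivity) htend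
    -- conclude
    have hev : ∀ᶠ m in atTop, f m ≤ 3*ε/4 := by
      filter_upwards [hshift, hsmall, eventually_ge_atTop n] with m h1 h2 h3
      calc f m ≤ (n : ℝ)/(m+1) + g (m - n) := hfg m h3
        _ ≤ ε/8 + 5*ε/8 := by linarith
        _ = 3*ε/4 := by ring
    have hcb : IsCoboundedUnder (· ≤ ·) atTop f :=
      isCoboundedUnder_le_of_le atTop fun m => densFun_nonneg S m
    calc upperDensity S = atTop.limsup f := rfl
      _ ≤ 3*ε/4 := limsup_le_of_le hcb hev
      _ < ε := by linarith
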